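/- Let Q be a symmetric nonnegative matrix on countable S with finite Green's function G. If Σ_{k=1}^∞ k·sup_{z∈S} (Q^k)(0,z) < ∞ for a fixed base point 0 ∈ S, then, setting h(z) = G(z,0)/G(0,0) (so that by symmetry h(z) = G(0,z)/G(0,0)), there exist a decreasing summable sequence (a_ρ) and ρ : S → ℕ₀ such that Σ_{m=0}^{ρ(z)} (Q^m)(0,z) ≥ h(z)·G(0,0)/2 and h(z)·G(0,0) ≤ 2·a_{ρ(z)} for all z ∈ S; namely a_ρ = Σ_{m≥ρ} sup_{z'} (Q^m)(0,z') works (with the convention a_0 ≥ 1 after replacing a_0 by max(a_0,1)), and Σ_ρ a_ρ = Σ_k (k+1) sup_z (Q^k)(0,z) < ∞. -/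

import Mathlib

open scoped ENNReal

/-- Entrywise matrix powers of a nonnegative kernel `Q` on a countable set `S`. -/
noncomputable def qpow {S : Type*} [DecidableEq S] (Q : S → S → ℝ≥0∞) : ℕ → S → S → ℝ≥0∞
  | 0 => fun x y => if x = y then 1 else 0
  | n + 1 => fun x y => ∑' z, Q x z * qpow Q n z y

/-- Green's function `G = Σ_{n ≥ 0} Q^n` (entrywise, in `ℝ≥0∞`). -/
noncomputable def green {S : Type*} [DecidableEq S] (Q : S → S → ℝ≥0∞) (x y : S) : ℝ≥0∞ :=
  ∑' n, qpow Q n x y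

noncomputable def bAux {S : Type*} [DecidableEq S] (Q : S → S → ℝ≥0∞) (o : S) (k : ℕ) : ℝ≥0∞ :=
  ⨆ z : S, qpow Q k o z

noncomputable def aAux {S : Type*} [DecidableEq S] (Q : S → S → ℝ≥0∞) (o : S) (n : ℕ) : ℝ≥0∞ :=
  ∑' k, if n ≤ k then bAux Q o k else 0

lemma aAux_tail {S : Type*} [DecidableEq S] (Q : S → S → ℝ≥0∞) (o : S) (n : ℕ) :
    aAux Q o n = ∑' i, bAux Q o (i + n) := by
  have h1 := Summable.sum_add_tsum_nat_add' (f := fun k => if n ≤ k then bAux Q o k else 0) (k := n)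
    ENNReal.summable
  have h2 : ∑ i ∈ Finset.range n, (if n ≤ i then bAux Q o i else 0) = 0 := by
    apply Finset.sum_eq_zero; intro i hi
    rw [if_neg (not_le.mpr (Finset.mem_range.mp hi))]
  calc aAux Q o n = ∑' k, if n ≤ k then bAux Q o k else 0 := rfl
  _ = ∑ i ∈ Finset.range n, (if n ≤ i then bAux Q o i else 0)
      + ∑' i, (if n ≤ i + n then bAux Q o (i + n) else 0) := h1.symm
  _ = ∑' i, bAux Q o (i + n) := by
      rw [h2, zero_add]
      exact tsum_congr fun i => if_pos (Nat.le_add_left n i)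

lemma aAux_antitone {S : Type*} [DecidableEq S] (Q : S → S → ℝ≥0∞) (o : S) :
    Antitone (aAux Q o) := by
  apply antitone_nat_of_succ_le
  intro n
  refine ENNReal.tsum_le_tsum (fun k => ?_)
  by_cases h : n + 1 ≤ k
  · rw [if_pos h, if_pos (Nat.le_of_succ_le h)]
  · rw [if_neg h]; positivity


/-- for symmetric `Q` with `Σ_k k·sup_z (Q^k)(0,z) < ∞`, there are a
decreasing summable sequence `(a_ρ)` and `ρ : S → ℕ` with
`Σ_{m=0}^{ρ(z)} (Q^m)(0,z) ≥ G(0,z)/2` and `G(0,z) ≤ 2 a_{ρ(z)}`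
(note `h(z)·G(0,0) = G(0,z)` by symmetry). -/
theorem decorability_criterion {S : Type*} [Countable S] [DecidableEq S]
    (Q : S → S → ℝ≥0∞) (o : S)
    (hsym : ∀ x y, Q x y = Q y x)
    (hG : ∀ x y, green Q x y < ⊤)
    (hsum : ∑' (k : ℕ), (k : ℝ≥0∞) * ⨆ z : S, qpow Q k o z < ⊤) :
    ∃ (a : ℕ → ℝ≥0∞) (ρ : S → ℕ), Antitone a ∧ (∑' n, a n < ⊤) ∧
      ∀ z : S,
        green Q o z / 2 ≤ ∑ m ∈ Finset.range (ρ z + 1), qpow Q m o z ∧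
        green Q o z ≤ 2 * a (ρ z) := by
  classical
  have hsum' : ∑' (k : ℕ), (k : ℝ≥0∞) * bAux Q o k < ⊤ := hsum
  have hb0 : bAux Q o 0 ≤ 1 := by
    refine iSup_le fun z => ?_
    show (if o = z then (1:ℝ≥0∞) else 0) ≤ 1
    split_ifs <;> simp
  have hqle : ∀ (k : ℕ) (z : S), qpow Q k o z ≤ bAux Q o k := fun k z =>
    le_iSup (fun w => qpow Q k o w) z
  have hbsum : ∑' k, bAux Q o k < ⊤ := by
    rw [tsum_eq_zero_add' ENNReal.summable]
    have h1 : ∑' (k : ℕ), bAux Q o (k + 1) ≤ ∑' (k : ℕ), (k : ℝ≥0∞) * bAux Q o k := by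
      calc ∑' (k : ℕ), bAux Q o (k + 1)
          ≤ ∑' (k : ℕ), ((k + 1 : ℕ) : ℝ≥0∞) * bAux Q o (k + 1) := by
            refine ENNReal.tsum_le_tsum (fun k => ?_)
            exact le_mul_of_one_le_left (by positivity) (by exact_mod_cast Nat.one_le_iff_ne_zero.mpr (Nat.succ_ne_zero k))
        _ ≤ ∑' (k : ℕ), (k : ℝ≥0∞) * bAux Q o k :=
            ENNReal.tsum_comp_le_tsum_of_injective (add_left_injective (1 : ℕ))
              (fun k : ℕ => (k : ℝ≥0∞) * bAux Q o k)
    exact ENNReal.add_lt_top.mpr ⟨lt_of_le_of_lt hb0 ENNReal.one_lt_top,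
      lt_of_le_of_lt h1 hsum'⟩
  have hasum : ∑' n, aAux Q o n < ⊤ := by
    have heq : ∑' n, aAux Q o n = ∑' k, ((k + 1 : ℕ) : ℝ≥0∞) * bAux Q o k := by
      rw [show ∑' n, aAux Q o n = ∑' n, ∑' k, (if n ≤ k then bAux Q o k else 0) from rfl,
        ENNReal.tsum_comm]
      refine tsum_congr fun k => ?_
      rw [tsum_eq_sum (s := Finset.range (k + 1))
        (fun n hn => if_neg (fun h => hn (Finset.mem_range.mpr (Nat.lt_succ_of_le h))))]
      rw [Finset.sum_congr rfl (fun n hn => if_pos (Nat.lt_succ_iff.mp (Finset.mem_range.mp hn)))]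
      rw [Finset.sum_const, Finset.card_range, nsmul_eq_mul]
    rw [heq]
    have : ∀ k : ℕ, ((k + 1 : ℕ) : ℝ≥0∞) * bAux Q o k
        = (k : ℝ≥0∞) * bAux Q o k + bAux Q o k := by
      intro k; push_cast; ring
    rw [tsum_congr this, ENNReal.tsum_add]
    exact ENNReal.add_lt_top.mpr ⟨hsum', hbsum⟩
  have hlim : Filter.Tendsto (aAux Q o) Filter.atTop (nhds 0) :=
    Filter.Tendsto.congr (fun n => (aAux_tail Q o n).symm)
      (ENNReal.tendsto_sum_nat_add (bAux Q o) hbsum.ne)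
  have hex : ∀ z : S, green Q o z ≠ 0 → ∃ n, aAux Q o (n + 1) ≤ green Q o z / 2 := by
    intro z hz
    have hpos : 0 < green Q o z / 2 := ENNReal.div_pos hz (by norm_num)
    obtain ⟨n, hn⟩ := (hlim.eventually_lt_const hpos).exists
    exact ⟨n, (aAux_antitone Q o (Nat.le_succ n)).trans hn.le⟩
  refine ⟨aAux Q o, fun z => if h : ∃ n, aAux Q o (n + 1) ≤ green Q o z / 2
    then Nat.find h else 0, aAux_antitone Q o, hasum, fun z => ?_⟩
  by_cases hz : green Q o z = 0
  · constructor
    · simp [hz]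
    · simp [hz]
  · have hex' := hex z hz
    simp only [dif_pos hex']
    set n := Nat.find hex' with hn
    have hfind : aAux Q o (n + 1) ≤ green Q o z / 2 := Nat.find_spec hex'
    have hG2ne : green Q o z / 2 ≠ ⊤ :=
      (ENNReal.div_lt_top (hG o z).ne (by norm_num)).ne
    have hdecomp : green Q o z = ∑ m ∈ Finset.range (n + 1), qpow Q m o z
        + ∑' i, qpow Q (i + (n + 1)) o z :=
      (Summable.sum_add_tsum_nat_add' (f := fun m => qpow Q m o z) (k := n + 1) ENNReal.summable).symm
    have htail : ∑' i, qpow Q (i + (n + 1)) o z ≤ aAux Q o (n + 1) := by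
      rw [aAux_tail]
      exact ENNReal.tsum_le_tsum (fun i => hqle (i + (n + 1)) z)
    constructor
    · have key0 := add_le_add_right (htail.trans hfind)
        (∑ m ∈ Finset.range (n + 1), qpow Q m o z)
      have key : green Q o z ≤ ∑ m ∈ Finset.range (n + 1), qpow Q m o z + green Q o z / 2 :=
        hdecomp.le.trans key0
      have key2 : green Q o z / 2 + green Q o z / 2
          ≤ ∑ m ∈ Finset.range (n + 1), qpow Q m o z + green Q o z / 2 := by
        rw [ENNReal.add_halves]; exact key
      exact (ENNReal.add_le_add_iff_right hG2ne).mp key2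
    · rcases Nat.eq_zero_or_pos n with h0 | hpos
      · have hle : green Q o z ≤ aAux Q o 0 := by
          rw [aAux_tail]
          refine ENNReal.tsum_le_tsum (fun m => ?_)
          simpa using hqle m z
        rw [h0]
        exact hle.trans (le_mul_of_one_le_left (by positivity) one_le_two)
      · obtain ⟨m, hm⟩ := Nat.exists_eq_succ_of_ne_zero hpos.ne'
        have hmin : ¬ aAux Q o (m + 1) ≤ green Q o z / 2 :=
          Nat.find_min hex' (by omega)
        have h2 : green Q o z / 2 ≤ aAux Q o n := by
          rw [hm]; exact (not_le.mp hmin).le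
        calc green Q o z = 2 * (green Q o z / 2) :=
              (ENNReal.mul_div_cancel two_ne_zero (by norm_num)).symm
          _ ≤ 2 * aAux Q o n := mul_le_mul_right h2 2
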